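/- Consider the infinite word u = 0 1 00 11 000 111 0000 1111 ⋯ over {0,1} obtained by concatenating 0^k 1^k for k = 1, 2, 3, …. Then the factor complexity of u satisfies p_u(n) = n(n+1)/2 + 1 for all n ≥ 0. -/

import Mathlib

/-- The factor of the infinite word `u` of length `n` starting at position `k`. -/
def factorAt {A : Type*} (u : ℕ → A) (k n : ℕ) : List A :=
  (List.range n).map (fun j => u (k + j))

/-- `w` is a factor of the infinite word `u`. -/
def IsFactor {A : Type*} (u : ℕ → A) (w : List A) : Prop :=
  ∃ k, w = factorAt u k w.length

/-- The infinite word `0 1 00 11 000 111 0000 1111 ⋯` obtained by concatenating the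
blocks `0^k 1^k` for `k = 1, 2, 3, …` (`false` plays the role of `0`). -/
def zeroOneBlocksWord (n : ℕ) : Bool :=
  ((List.range (n + 1)).flatMap
    (fun k => List.replicate (k + 1) false ++ List.replicate (k + 1) true)).getD n false

namespace ZOB

abbrev u := zeroOneBlocksWord

def L (N : ℕ) : List Bool :=
  (List.range N).flatMap (fun k => List.replicate (k + 1) false ++ List.replicate (k + 1) true)

lemma L_succ (N : ℕ) :
    L (N+1) = L N ++ (List.replicate (N+1) false ++ List.replicate (N+1) true) := by
  simp [L, List.range_succ]

lemma L_length (N : ℕ) : (L N).length = N * (N+1) := by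
  induction N with
  | zero => simp [L]
  | succ N ih => rw [L_succ]; simp [ih]; ring

lemma u_eq_getD (p : ℕ) : u p = (L (p+1)).getD p false := rfl

lemma L_getD_stable {p N M : ℕ} (h : N ≤ M) (hp : p < N*(N+1)) :
    (L M).getD p false = (L N).getD p false := by
  induction M with
  | zero =>
    have : N = 0 := by omega
    subst this; rfl
  | succ M ih =>
    rcases Nat.lt_or_ge N (M+1) with hlt | hge
    · have hNM : N ≤ M := by omega
      have hlen : p < (L M).length := by
        rw [L_length]
        calc p < N*(N+1) := hp
        _ ≤ M*(M+1) := Nat.mul_le_mul (by omega) (by omega)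
      rw [L_succ, List.getD_append _ _ _ _ hlen, ih hNM]
    · have : N = M+1 := by omega
      rw [this]

lemma u_block (m d : ℕ) (hd : d < 2*(m+1)) :
    u (m*(m+1) + d) = decide (m+1 ≤ d) := by
  set p := m*(m+1) + d with hp
  have e2 : (m+1)*((m+1)+1) = m*(m+1) + 2*(m+1) := by ring
  have h1 : p < (m+1)*((m+1)+1) := by omega
  have h3 : m ≤ m*(m+1) := Nat.le_mul_of_pos_right m (by omega)
  rw [u_eq_getD, L_getD_stable (N := m+1) (by omega) h1, L_succ]
  have hlen : (L m).length ≤ p := by rw [L_length]; exact Nat.le_add_right _ _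
  rw [List.getD_append_right _ _ _ _ hlen]
  rw [L_length]
  have hd' : p - m*(m+1) = d := by omega
  rw [hd']
  by_cases hc : d < m+1
  · rw [List.getD_append _ _ _ _ (by simpa using hc)]
    rw [List.getD_eq_getElem _ _ (by simpa using hc), List.getElem_replicate]
    simp; omega
  · rw [List.getD_append_right _ _ _ _ (by simpa using hc)]
    rw [List.getD_eq_getElem _ _ (by simp; omega), List.getElem_replicate]
    simp; omega

lemma u_false {m d : ℕ} (hd : d ≤ m) : u (m*(m+1) + d) = false := by
  rw [u_block m d (by omega)]; simp; omega

lemma u_true {m d : ℕ} (hd : d ≤ m) : u ((m+1)*(m+1) + d) = true := by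
  have e : (m+1)*(m+1) + d = m*(m+1) + (m+1+d) := by ring
  rw [e, u_block m (m+1+d) (by omega)]
  simp

lemma fa_length (v : ℕ → Bool) (s n : ℕ) : (factorAt v s n).length = n := by simp [factorAt]

lemma fa_split (s a b : ℕ) :
    factorAt u s (a+b) = factorAt u s a ++ factorAt u (s+a) b := by
  simp only [factorAt, List.range_add, List.map_append, List.map_map]
  congr 1
  apply List.map_congr_left
  intro j hj
  simp only [Function.comp]
  congr 1
  omega

lemma fa_const {s n : ℕ} {c : Bool} (h : ∀ i < n, u (s+i) = c) :
    factorAt u s n = List.replicate n c := by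
  rw [List.eq_replicate_iff]
  constructor
  · simp [factorAt]
  · intro b hb
    simp only [factorAt, List.mem_map, List.mem_range] at hb
    obtain ⟨j, hj, rfl⟩ := hb
    exact h j hj

lemma fa_false {m e l : ℕ} (h : e + l ≤ m+1) :
    factorAt u (m*(m+1)+e) l = List.replicate l false := by
  apply fa_const
  intro i hi
  have : m*(m+1)+e+i = m*(m+1)+(e+i) := by ring
  rw [this]; exact u_false (by omega)

lemma fa_true {m e l : ℕ} (h : e + l ≤ m+1) :
    factorAt u ((m+1)*(m+1)+e) l = List.replicate l true := by
  apply fa_const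
  intro i hi
  have : (m+1)*(m+1)+e+i = (m+1)*(m+1)+(e+i) := by ring
  rw [this]; exact u_true (by omega)

lemma fa_head {s l : ℕ} (h : 1 ≤ l) : (factorAt u s l).head? = some (u s) := by
  obtain ⟨l', rfl⟩ : ∃ l', l = l'+1 := ⟨l-1, by omega⟩
  simp [factorAt, List.range_succ_eq_map]

lemma fa_getElem {s n i : ℕ} (h : i < n) :
    (factorAt u s n)[i]'(by rw [fa_length]; exact h) = u (s+i) := by
  simp [factorAt]


def W (n : ℕ) : ℕ ⊕ (ℕ ⊕ ℕ × ℕ) → List Bool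
  | .inl i => List.replicate i false ++ List.replicate (n-i) true
  | .inr (.inl j) => List.replicate j true ++ List.replicate (n-j) false
  | .inr (.inr (a,b)) =>
      if a ≤ b then
        List.replicate (a+1) false ++
          (List.replicate (b+1) true ++ factorAt u ((b+1)*(b+2)) (n-(a+1)-(b+1)))
      else
        List.replicate (b+1) true ++ factorAt u (a*(a+1)) (n-(b+1))

def Par (n : ℕ) : Finset (ℕ ⊕ (ℕ ⊕ ℕ × ℕ)) :=
  (Finset.range (n+1)).disjSum ((Finset.Icc 1 (n-1)).disjSum
    ((Finset.range (n-2)).biUnion (fun k => Finset.HasAntidiagonal.antidiagonal k)))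

lemma inl_mem_Par {n i : ℕ} : (.inl i : ℕ ⊕ (ℕ ⊕ ℕ × ℕ)) ∈ Par n ↔ i ≤ n := by
  simp [Par]

lemma ball_mem_Par {n j : ℕ} : (.inr (.inl j) : ℕ ⊕ (ℕ ⊕ ℕ × ℕ)) ∈ Par n ↔ 1 ≤ j ∧ j ≤ n-1 := by
  simp [Par]

lemma pair_mem_Par {n a b : ℕ} : (.inr (.inr (a,b)) : ℕ ⊕ (ℕ ⊕ ℕ × ℕ)) ∈ Par n ↔ a+b+3 ≤ n := by
  simp only [Par, Finset.inr_mem_disjSum, Finset.mem_biUnion, Finset.mem_range,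
    Finset.HasAntidiagonal.mem_antidiagonal]
  constructor
  · rintro ⟨k, hk, h⟩; omega
  · intro h; exact ⟨a+b, by omega, rfl⟩

lemma key {c : Bool} : ∀ (i : ℕ) {i' : ℕ} {X X' : List Bool},
    List.replicate i c ++ X = List.replicate i' c ++ X' →
    X.head? ≠ some c → X'.head? ≠ some c → i = i' ∧ X = X' := by
  intro i
  induction i with
  | zero =>
    intro i' X X' h hX hX'
    cases i' with
    | zero => simpa using h
    | succ i' =>
      exfalso; apply hX
      simp only [List.replicate_succ, List.replicate_zero, List.nil_append, List.cons_append] at h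
      rw [h]; rfl
  | succ i ih =>
    intro i' X X' h hX hX'
    cases i' with
    | zero =>
      exfalso; apply hX'
      simp only [List.replicate_succ, List.replicate_zero, List.nil_append, List.cons_append] at h
      rw [← h]; rfl
    | succ i' =>
      simp only [List.replicate_succ, List.cons_append, List.cons.injEq, true_and] at h
      obtain ⟨h1, h2⟩ := ih h hX hX'
      exact ⟨by omega, h2⟩

lemma headTF {k : ℕ} : (List.replicate k true).head? ≠ some false := by
  cases k <;> simp [List.replicate_succ]

lemma headFT {k : ℕ} : (List.replicate k false).head? ≠ some true := by
  cases k <;> simp [List.replicate_succ]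

lemma headTappF {k : ℕ} (hk : 1 ≤ k) (rest : List Bool) :
    (List.replicate k true ++ rest).head? ≠ some false := by
  obtain ⟨k', rfl⟩ : ∃ k', k = k'+1 := ⟨k-1, by omega⟩
  simp [List.replicate_succ]

lemma headFappT {k : ℕ} (hk : 1 ≤ k) (rest : List Bool) :
    (List.replicate k false ++ rest).head? ≠ some true := by
  obtain ⟨k', rfl⟩ : ∃ k', k = k'+1 := ⟨k-1, by omega⟩
  simp [List.replicate_succ]

lemma headFA_F {s l : ℕ} (hl : 1 ≤ l) (hu : u s = false) :
    (factorAt u s l).head? ≠ some true := by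
  rw [fa_head hl, hu]; simp

lemma headFA_T {s l : ℕ} (hl : 1 ≤ l) (hu : u s = true) :
    (factorAt u s l).head? ≠ some false := by
  rw [fa_head hl, hu]; simp

lemma u_start_false (b : ℕ) : u ((b+1)*(b+2)) = false := by
  have h := u_false (m := b+1) (d := 0) (by omega)
  simpa using h

lemma u_blockstart_false (a : ℕ) : u (a*(a+1)) = false := by
  have h := u_false (m := a) (d := 0) (by omega)
  simpa using h

lemma u_sq_true (a : ℕ) : u ((a+1)*(a+1)) = true := by
  have h := u_true (m := a) (d := 0) (by omega)
  simpa using h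

lemma B_decomp {a M : ℕ} (h : a+1 ≤ M) :
    factorAt u (a*(a+1)) M =
      List.replicate (a+1) false ++ factorAt u ((a+1)*(a+1)) (M-(a+1)) := by
  have e : M = (a+1) + (M-(a+1)) := by omega
  conv_lhs => rw [e]
  rw [fa_split]
  congr 1
  · have h0 := fa_false (m := a) (e := 0) (l := a+1) (by omega)
    simpa using h0
  · congr 1; ring

lemma aux_MB {n i j : ℕ} (hj1 : 1 ≤ j) (hj2 : j ≤ n-1)
    (h : W n (.inl i) = W n (.inr (.inl j))) : False := by
  have h' : List.replicate i false ++ List.replicate (n-i) true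
      = List.replicate 0 false ++ (List.replicate j true ++ List.replicate (n-j) false) := by
    simpa [W] using h
  obtain ⟨hi0, h2⟩ := key i h' headTF (headTappF hj1 _)
  have h2' : List.replicate (n-i) true ++ ([] : List Bool)
      = List.replicate j true ++ List.replicate (n-j) false := by simpa using h2
  obtain ⟨hnj, h3⟩ := key (c := true) (n-i) h2' (by simp) headFT
  have hl := congrArg List.length h3
  simp at hl
  omega

lemma aux_MP {n i a b : ℕ} (hab3 : a+b+3 ≤ n)
    (h : W n (.inl i) = W n (.inr (.inr (a,b)))) : False := by
  by_cases hab : a ≤ b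
  · have h' : List.replicate i false ++ List.replicate (n-i) true
        = List.replicate (a+1) false ++ (List.replicate (b+1) true ++
            factorAt u ((b+1)*(b+2)) (n-(a+1)-(b+1))) := by
      simpa [W, hab] using h
    obtain ⟨hi, h2⟩ := key i h' headTF (headTappF (by omega) _)
    have h2' : List.replicate (n-i) true ++ ([] : List Bool)
        = List.replicate (b+1) true ++ factorAt u ((b+1)*(b+2)) (n-(a+1)-(b+1)) := by
      simpa using h2
    obtain ⟨_, h3⟩ := key (c := true) (n-i) h2' (by simp)
      (headFA_F (by omega) (u_start_false b))
    have hl := congrArg List.length h3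
    rw [List.length_nil, fa_length] at hl
    omega
  · have h' : List.replicate i false ++ List.replicate (n-i) true
        = List.replicate 0 false ++ (List.replicate (b+1) true ++
            factorAt u (a*(a+1)) (n-(b+1))) := by
      simpa [W, hab] using h
    obtain ⟨hi, h2⟩ := key i h' headTF (headTappF (by omega) _)
    have h2' : List.replicate (n-i) true ++ ([] : List Bool)
        = List.replicate (b+1) true ++ factorAt u (a*(a+1)) (n-(b+1)) := by
      simpa using h2
    obtain ⟨_, h3⟩ := key (c := true) (n-i) h2' (by simp)
      (headFA_F (by omega) (u_blockstart_false a))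
    have hl := congrArg List.length h3
    rw [List.length_nil, fa_length] at hl
    omega

lemma aux_BP {n j a b : ℕ} (hj1 : 1 ≤ j) (hab3 : a+b+3 ≤ n)
    (h : W n (.inr (.inl j)) = W n (.inr (.inr (a,b)))) : False := by
  by_cases hab : a ≤ b
  · have h' : List.replicate 0 false ++ (List.replicate j true ++ List.replicate (n-j) false)
        = List.replicate (a+1) false ++ (List.replicate (b+1) true ++
            factorAt u ((b+1)*(b+2)) (n-(a+1)-(b+1))) := by
      simpa [W, hab] using h
    have := (key 0 h' (headTappF hj1 _) (headTappF (by omega) _)).1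
    omega
  · have h' : List.replicate j true ++ List.replicate (n-j) false
        = List.replicate (b+1) true ++ factorAt u (a*(a+1)) (n-(b+1)) := by
      simpa [W, hab] using h
    obtain ⟨hj, h3⟩ := key (c := true) j h' headFT
      (headFA_F (by omega) (u_blockstart_false a))
    have hlen : n-j = n-(b+1) := by
      have := congrArg List.length h3; simpa [fa_length] using this
    have hidx : a+1 < n-j := by omega
    have e := List.getElem_of_eq h3 (i := a+1) (by simpa using hidx)
    rw [List.getElem_replicate] at e
    rw [fa_getElem (by omega)] at e
    have et : u (a*(a+1)+(a+1)) = true := by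
      have e2 : a*(a+1)+(a+1) = (a+1)*(a+1) := by ring
      rw [e2]; exact u_sq_true a
    rw [et] at e
    exact Bool.noConfusion e

lemma W_injOn (n : ℕ) : Set.InjOn (W n) (Par n) := by
  intro p hp q hq h
  rw [Finset.mem_coe] at hp hq
  rcases p with i | j | ⟨a, b⟩ <;> rcases q with i' | j' | ⟨a', b'⟩
  · rw [inl_mem_Par] at hp hq
    have h' : List.replicate i false ++ List.replicate (n-i) true
        = List.replicate i' false ++ List.replicate (n-i') true := by simpa [W] using h
    rw [(key i h' headTF headTF).1]
  · rw [ball_mem_Par] at hq; exact (aux_MB hq.1 hq.2 h).elim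
  · rw [pair_mem_Par] at hq; exact (aux_MP hq h).elim
  · rw [ball_mem_Par] at hp; exact (aux_MB hp.1 hp.2 h.symm).elim
  · rw [ball_mem_Par] at hp hq
    have h' : List.replicate j true ++ List.replicate (n-j) false
        = List.replicate j' true ++ List.replicate (n-j') false := by simpa [W] using h
    obtain ⟨hj, _⟩ := key (c := true) j h' headFT headFT
    rw [hj]
  · rw [ball_mem_Par] at hp; rw [pair_mem_Par] at hq; exact (aux_BP hp.1 hq h).elim
  · rw [pair_mem_Par] at hp; exact (aux_MP hp h.symm).elim
  · rw [pair_mem_Par] at hp; rw [ball_mem_Par] at hq; exact (aux_BP hq.1 hp h.symm).elim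
  · rw [pair_mem_Par] at hp hq
    by_cases hab : a ≤ b <;> by_cases hab' : a' ≤ b'
    · have h' : List.replicate (a+1) false ++ (List.replicate (b+1) true ++
            factorAt u ((b+1)*(b+2)) (n-(a+1)-(b+1)))
          = List.replicate (a'+1) false ++ (List.replicate (b'+1) true ++
            factorAt u ((b'+1)*(b'+2)) (n-(a'+1)-(b'+1))) := by
        simpa [W, hab, hab'] using h
      obtain ⟨ha, h2⟩ := key (a+1) h' (headTappF (by omega) _) (headTappF (by omega) _)
      obtain ⟨hb, _⟩ := key (c := true) (b+1) h2
        (headFA_F (by omega) (u_start_false b)) (headFA_F (by omega) (u_start_false b'))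
      obtain rfl : a = a' := by omega
      obtain rfl : b = b' := by omega
      rfl
    · have h' : List.replicate (a+1) false ++ (List.replicate (b+1) true ++
            factorAt u ((b+1)*(b+2)) (n-(a+1)-(b+1)))
          = List.replicate 0 false ++ (List.replicate (b'+1) true ++
            factorAt u (a'*(a'+1)) (n-(b'+1))) := by
        simpa [W, hab, hab'] using h
      have := (key (a+1) h' (headTappF (by omega) _) (headTappF (by omega) _)).1
      omega
    · have h' : List.replicate 0 false ++ (List.replicate (b+1) true ++
            factorAt u (a*(a+1)) (n-(b+1)))
          = List.replicate (a'+1) false ++ (List.replicate (b'+1) true ++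
            factorAt u ((b'+1)*(b'+2)) (n-(a'+1)-(b'+1))) := by
        simpa [W, hab, hab'] using h
      have := (key 0 h' (headTappF (by omega) _) (headTappF (by omega) _)).1
      omega
    · have h' : List.replicate (b+1) true ++ factorAt u (a*(a+1)) (n-(b+1))
          = List.replicate (b'+1) true ++ factorAt u (a'*(a'+1)) (n-(b'+1)) := by
        simpa [W, hab, hab'] using h
      obtain ⟨hb, h3⟩ := key (c := true) (b+1) h'
        (headFA_F (by omega) (u_blockstart_false a))
        (headFA_F (by omega) (u_blockstart_false a'))
      obtain rfl : b = b' := by omega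
      rw [B_decomp (by omega), B_decomp (a := a') (by omega)] at h3
      obtain ⟨ha, _⟩ := key (a+1) h3
        (headFA_T (by omega) (u_sq_true a)) (headFA_T (by omega) (u_sq_true a'))
      obtain rfl : a = a' := by omega
      rfl

lemma W_is_factor {n : ℕ} {p} (hp : p ∈ Par n) : ∃ σ, W n p = factorAt u σ n := by
  rcases p with i | j | ⟨a, b⟩
  · rw [inl_mem_Par] at hp
    refine ⟨n*(n+1)+(n+1-i), ?_⟩
    have h1 : factorAt u (n*(n+1)+(n+1-i)) i = List.replicate i false :=
      fa_false (by omega)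
    have h2 : factorAt u ((n+1)*(n+1)) (n-i) = List.replicate (n-i) true := by
      have := fa_true (m := n) (e := 0) (l := n-i) (by omega); simpa using this
    have e2 : n*(n+1)+(n+1-i) + i = (n+1)*(n+1) := by
      have : (n+1)*(n+1) = n*(n+1)+(n+1) := by ring
      omega
    calc W n (.inl i) = List.replicate i false ++ List.replicate (n-i) true := rfl
      _ = factorAt u (n*(n+1)+(n+1-i)) i ++ factorAt u ((n+1)*(n+1)) (n-i) := by rw [h1, h2]
      _ = factorAt u (n*(n+1)+(n+1-i)) i ++ factorAt u (n*(n+1)+(n+1-i)+i) (n-i) := by rw [e2]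
      _ = factorAt u (n*(n+1)+(n+1-i)) (i+(n-i)) := (fa_split _ _ _).symm
      _ = factorAt u (n*(n+1)+(n+1-i)) n := by rw [show i+(n-i) = n from by omega]
  · rw [ball_mem_Par] at hp
    obtain ⟨hj1, hj2⟩ := hp
    refine ⟨(n+1)*(n+1)+(n+1-j), ?_⟩
    have h1 : factorAt u ((n+1)*(n+1)+(n+1-j)) j = List.replicate j true :=
      fa_true (by omega)
    have h2 : factorAt u ((n+1)*(n+2)) (n-j) = List.replicate (n-j) false := by
      have := fa_false (m := n+1) (e := 0) (l := n-j) (by omega); simpa using this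
    have e2 : (n+1)*(n+1)+(n+1-j) + j = (n+1)*(n+2) := by
      have : (n+1)*(n+2) = (n+1)*(n+1)+(n+1) := by ring
      omega
    calc W n (.inr (.inl j)) = List.replicate j true ++ List.replicate (n-j) false := rfl
      _ = factorAt u ((n+1)*(n+1)+(n+1-j)) j ++ factorAt u ((n+1)*(n+2)) (n-j) := by
          rw [h1, h2]
      _ = factorAt u ((n+1)*(n+1)+(n+1-j)) j
            ++ factorAt u ((n+1)*(n+1)+(n+1-j)+j) (n-j) := by rw [e2]
      _ = factorAt u ((n+1)*(n+1)+(n+1-j)) (j+(n-j)) := (fa_split _ _ _).symm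
      _ = factorAt u ((n+1)*(n+1)+(n+1-j)) n := by rw [show j+(n-j) = n from by omega]
  · rw [pair_mem_Par] at hp
    by_cases hab : a ≤ b
    · refine ⟨b*(b+1)+(b-a), ?_⟩
      have h1 : factorAt u (b*(b+1)+(b-a)) (a+1) = List.replicate (a+1) false :=
        fa_false (by omega)
      have h2 : factorAt u ((b+1)*(b+1)) (b+1) = List.replicate (b+1) true := by
        have := fa_true (m := b) (e := 0) (l := b+1) (by omega); simpa using this
      have e2 : b*(b+1)+(b-a) + (a+1) = (b+1)*(b+1) := by
        have : (b+1)*(b+1) = b*(b+1)+(b+1) := by ring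
        omega
      have e3 : (b+1)*(b+1) + (b+1) = (b+1)*(b+2) := by ring
      have hW : W n (.inr (.inr (a,b))) = List.replicate (a+1) false ++
          (List.replicate (b+1) true ++ factorAt u ((b+1)*(b+2)) (n-(a+1)-(b+1))) := by
        simp [W, hab]
      rw [hW]
      calc List.replicate (a+1) false ++
            (List.replicate (b+1) true ++ factorAt u ((b+1)*(b+2)) (n-(a+1)-(b+1)))
          = factorAt u (b*(b+1)+(b-a)) (a+1) ++
            (factorAt u ((b+1)*(b+1)) (b+1) ++ factorAt u ((b+1)*(b+2)) (n-(a+1)-(b+1))) := by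
            rw [h1, h2]
        _ = factorAt u (b*(b+1)+(b-a)) (a+1) ++
            (factorAt u ((b+1)*(b+1)) (b+1)
              ++ factorAt u ((b+1)*(b+1)+(b+1)) (n-(a+1)-(b+1))) := by rw [e3]
        _ = factorAt u (b*(b+1)+(b-a)) (a+1) ++
            factorAt u ((b+1)*(b+1)) ((b+1) + (n-(a+1)-(b+1))) := by rw [← fa_split]
        _ = factorAt u (b*(b+1)+(b-a)) (a+1) ++
            factorAt u (b*(b+1)+(b-a)+(a+1)) ((b+1) + (n-(a+1)-(b+1))) := by rw [e2]
        _ = factorAt u (b*(b+1)+(b-a)) ((a+1) + ((b+1) + (n-(a+1)-(b+1)))) := by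
            rw [← fa_split]
        _ = factorAt u (b*(b+1)+(b-a)) n := by
            rw [show (a+1) + ((b+1) + (n-(a+1)-(b+1))) = n from by omega]
    · have hb1 : b+1 ≤ a := by omega
      obtain ⟨a', rfl⟩ : ∃ a', a = a'+1 := ⟨a-1, by omega⟩
      refine ⟨(a'+1)*(a'+1)+(a'-b), ?_⟩
      have h1 : factorAt u ((a'+1)*(a'+1)+(a'-b)) (b+1) = List.replicate (b+1) true :=
        fa_true (by omega)
      have e2 : (a'+1)*(a'+1)+(a'-b) + (b+1) = (a'+1)*(a'+1+1) := by
        have : (a'+1)*(a'+1+1) = (a'+1)*(a'+1)+(a'+1) := by ring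
        omega
      have hW : W n (.inr (.inr (a'+1,b))) = List.replicate (b+1) true ++
          factorAt u ((a'+1)*(a'+1+1)) (n-(b+1)) := by
        simp [W, hab]
      rw [hW]
      calc List.replicate (b+1) true ++ factorAt u ((a'+1)*(a'+1+1)) (n-(b+1))
          = factorAt u ((a'+1)*(a'+1)+(a'-b)) (b+1)
            ++ factorAt u ((a'+1)*(a'+1+1)) (n-(b+1)) := by rw [h1]
        _ = factorAt u ((a'+1)*(a'+1)+(a'-b)) (b+1)
            ++ factorAt u ((a'+1)*(a'+1)+(a'-b)+(b+1)) (n-(b+1)) := by rw [e2]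
        _ = factorAt u ((a'+1)*(a'+1)+(a'-b)) ((b+1)+(n-(b+1))) := (fa_split _ _ _).symm
        _ = factorAt u ((a'+1)*(a'+1)+(a'-b)) n := by
            rw [show (b+1)+(n-(b+1)) = n from by omega]

lemma exists_block (s : ℕ) : ∃ m d, s = m*(m+1) + d ∧ d < 2*(m+1) := by
  set r := Nat.sqrt s with hr
  clear_value r
  have h1 : r*r ≤ s := by
    have := Nat.sqrt_le' s
    rw [pow_two] at this
    rw [hr]; exact this
  have h2 : s < (r+1)*(r+1) := by rw [hr]; exact Nat.lt_succ_sqrt s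
  by_cases hc : s < r*r + r
  · rcases Nat.eq_zero_or_pos r with h0 | h0
    · exfalso; rw [h0] at hc; omega
    obtain ⟨r', rfl⟩ : ∃ r', r = r'+1 := ⟨r-1, by omega⟩
    refine ⟨r', s - r'*(r'+1), ?_, ?_⟩
    · have e1 : (r'+1)*(r'+1) = r'*(r'+1) + (r'+1) := by ring
      omega
    · have e1 : (r'+1)*(r'+1) = r'*(r'+1) + (r'+1) := by ring
      omega
  · refine ⟨r, s - r*(r+1), ?_, ?_⟩
    · have e1 : r*(r+1) = r*r + r := by ring
      omega
    · have e1 : r*(r+1) = r*r + r := by ring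
      have e2 : (r+1)*(r+1) = r*r + 2*r + 1 := by ring
      omega

lemma complete (n s : ℕ) : ∃ p ∈ Par n, factorAt u s n = W n p := by
  obtain ⟨m, d, rfl, hd⟩ := exists_block s
  by_cases hdm : d ≤ m
  · by_cases hn : n ≤ m+1-d
    · refine ⟨.inl n, inl_mem_Par.mpr le_rfl, ?_⟩
      have h0 : factorAt u (m*(m+1)+d) n = List.replicate n false := fa_false (by omega)
      rw [h0]; simp [W]
    · set i0 := m+1-d with hi0
      have hsplit : factorAt u (m*(m+1)+d) n
          = factorAt u (m*(m+1)+d) i0 ++ factorAt u ((m+1)*(m+1)) (n-i0) := by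
        conv_lhs => rw [show n = i0 + (n-i0) from by omega]
        rw [fa_split, show m*(m+1)+d+i0 = (m+1)*(m+1) from by
          have : (m+1)*(m+1) = m*(m+1)+(m+1) := by ring
          omega]
      have hfirst : factorAt u (m*(m+1)+d) i0 = List.replicate i0 false :=
        fa_false (by omega)
      by_cases hn2 : n - i0 ≤ m+1
      · refine ⟨.inl i0, inl_mem_Par.mpr (by omega), ?_⟩
        have hsecond : factorAt u ((m+1)*(m+1)) (n-i0) = List.replicate (n-i0) true := by
          have := fa_true (m := m) (e := 0) (l := n-i0) (by omega); simpa using this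
        rw [hsplit, hfirst, hsecond]
        simp [W]
      · refine ⟨.inr (.inr (i0-1, m)), pair_mem_Par.mpr (by omega), ?_⟩
        have hsplit2 : factorAt u ((m+1)*(m+1)) (n-i0)
            = factorAt u ((m+1)*(m+1)) (m+1) ++ factorAt u ((m+1)*(m+2)) (n-i0-(m+1)) := by
          conv_lhs => rw [show n-i0 = (m+1) + (n-i0-(m+1)) from by omega]
          rw [fa_split, show (m+1)*(m+1)+(m+1) = (m+1)*(m+2) from by ring]
        have hsecond : factorAt u ((m+1)*(m+1)) (m+1) = List.replicate (m+1) true := by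
          have := fa_true (m := m) (e := 0) (l := m+1) (by omega); simpa using this
        have hW : W n (.inr (.inr (i0-1, m))) = List.replicate (i0-1+1) false ++
            (List.replicate (m+1) true ++ factorAt u ((m+1)*(m+2)) (n-(i0-1+1)-(m+1))) := by
          simp [W, show i0-1 ≤ m from by omega]
        rw [hsplit, hfirst, hsplit2, hsecond, hW, show i0-1+1 = i0 from by omega]
  · set e0 := d-(m+1) with he0
    have epos : m*(m+1)+d = (m+1)*(m+1)+e0 := by
      have : (m+1)*(m+1) = m*(m+1)+(m+1) := by ring
      omega
    set j0 := m+1-e0 with hj0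
    by_cases hn : n ≤ j0
    · refine ⟨.inl 0, inl_mem_Par.mpr (by omega), ?_⟩
      have h0 : factorAt u ((m+1)*(m+1)+e0) n = List.replicate n true := fa_true (by omega)
      rw [epos, h0]; simp [W]
    · have hsplit : factorAt u ((m+1)*(m+1)+e0) n
          = factorAt u ((m+1)*(m+1)+e0) j0 ++ factorAt u ((m+1)*(m+2)) (n-j0) := by
        conv_lhs => rw [show n = j0 + (n-j0) from by omega]
        rw [fa_split, show (m+1)*(m+1)+e0+j0 = (m+1)*(m+2) from by
          have : (m+1)*(m+2) = (m+1)*(m+1)+(m+1) := by ring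
          omega]
      have hfirst : factorAt u ((m+1)*(m+1)+e0) j0 = List.replicate j0 true :=
        fa_true (by omega)
      by_cases hn2 : n - j0 ≤ m+2
      · refine ⟨.inr (.inl j0), ball_mem_Par.mpr ⟨by omega, by omega⟩, ?_⟩
        have hsecond : factorAt u ((m+1)*(m+2)) (n-j0) = List.replicate (n-j0) false := by
          have := fa_false (m := m+1) (e := 0) (l := n-j0) (by omega); simpa using this
        rw [epos, hsplit, hfirst, hsecond]
        simp [W]
      · refine ⟨.inr (.inr (m+1, j0-1)), pair_mem_Par.mpr (by omega), ?_⟩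
        have hW : W n (.inr (.inr (m+1, j0-1))) = List.replicate (j0-1+1) true ++
            factorAt u ((m+1)*(m+2)) (n-(j0-1+1)) := by
          simp [W, show ¬(m+1 ≤ j0-1) from by omega]
        rw [epos, hsplit, hfirst, hW, show j0-1+1 = j0 from by omega]

lemma arith (n T : ℕ) (hT : T * 2 = (n-2+1)*(n-2)) :
    (n+1) + ((n-1) + T) = n*(n+1)/2 + 1 := by
  rcases n with _ | _ | m
  · simp at hT; omega
  · simp at hT; omega
  · have e : m+1+1-2 = m := by omega
    rw [e] at hT
    have e2 : (m+1+1)*(m+1+1+1) = (m+1)*m + 4*m + 6 := by ring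
    have e3 : (m+1+1)*(m+1+1+1) = 2*(T + 2*m + 3) := by omega
    rw [e3, Nat.mul_div_cancel_left _ (by norm_num : 0 < 2)]
    omega

lemma Par_card (n : ℕ) : (Par n).card = n*(n+1)/2 + 1 := by
  have hdisj : ∀ x ∈ Finset.range (n-2), ∀ y ∈ Finset.range (n-2), x ≠ y →
      Disjoint (Finset.HasAntidiagonal.antidiagonal x) (Finset.HasAntidiagonal.antidiagonal y) := by
    intro x _ y _ hxy
    rw [Finset.disjoint_left]
    intro p hp hq
    rw [Finset.HasAntidiagonal.mem_antidiagonal] at hp hq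
    omega
  have hcard : ((Finset.range (n-2)).biUnion (fun k => Finset.HasAntidiagonal.antidiagonal k)).card
      = ∑ k ∈ Finset.range (n-2), (k+1) := by
    rw [Finset.card_biUnion hdisj]
    exact Finset.sum_congr rfl (fun k _ => Finset.Nat.card_antidiagonal k)
  have hs : (∑ k ∈ Finset.range (n-2), (k+1)) * 2 = (n-2+1)*(n-2) := by
    have h0 := Finset.sum_range_id_mul_two (n-2+1)
    rw [Finset.sum_range_succ'] at h0
    simpa using h0
  rw [Par, Finset.card_disjSum, Finset.card_disjSum, Finset.card_range, Nat.card_Icc, hcard]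
  have := arith n (∑ k ∈ Finset.range (n-2), (k+1)) hs
  omega

theorem complexity_main :
    ∀ n : ℕ, {w | IsFactor zeroOneBlocksWord w ∧ w.length = n}.ncard = n * (n + 1) / 2 + 1 := by
  intro n
  have hset : {w | IsFactor zeroOneBlocksWord w ∧ w.length = n} = ↑((Par n).image (W n)) := by
    ext w
    simp only [Set.mem_setOf_eq, Finset.coe_image, Set.mem_image, Finset.mem_coe]
    constructor
    · rintro ⟨⟨k, hk⟩, hlen⟩
      rw [hlen] at hk
      obtain ⟨p, hp, hW⟩ := complete n k
      exact ⟨p, hp, (hk.trans hW).symm⟩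
    · rintro ⟨p, hp, rfl⟩
      obtain ⟨σ, hσ⟩ := W_is_factor hp
      have hlen : (W n p).length = n := by rw [hσ, fa_length]
      exact ⟨⟨σ, by rw [hlen]; exact hσ⟩, hlen⟩
  rw [hset, Set.ncard_coe_finset, Finset.card_image_of_injOn (W_injOn n), Par_card]

end ZOB

/-- The factor complexity of the word `0 1 00 11 000 111 ⋯` is `n(n+1)/2 + 1`. -/
theorem complexity_of_zeroOneBlocksWord :
    ∀ n : ℕ, {w | IsFactor zeroOneBlocksWord w ∧ w.length = n}.ncard = n * (n + 1) / 2 + 1 := by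
  exact ZOB.complexity_main
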